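/- For all countable ordinals α and β: α̇ ≤ β̇ in H_{ℵ₁}(𝟑) if and only if α ≤ β, and likewise α̈ ≤ β̈ if and only if α ≤ β; furthermore α̇ and β̈ are incomparable in H_{ℵ₁}(𝟑) (neither α̇ ≤ β̈ nor β̈ ≤ α̇). -/

import Mathlib

/-- Hereditarily countable sets with urelements from the discrete order `{0,1,2}`:
urelements, and sets given as ranges of (small) indexed families. -/
inductive HC : Type 2 where
  | ur : Fin 3 → HC
  | sett : (ι : Type 1) → (ι → HC) → HC

/-- The set-theoretic rank of an element of `HC`. -/
noncomputable def HC.rank : HC → Ordinal.{1}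
  | .ur _ => 0
  | .sett _ f => ⨆ n, Order.succ (HC.rank (f n))

theorem HC.rank_lt {ι : Type 1} (f : ι → HC) (n : ι) :
    HC.rank (f n) < HC.rank (.sett ι f) := by
  have : Order.succ (HC.rank (f n)) ≤ HC.rank (.sett ι f) := by
    rw [HC.rank]
    exact le_ciSup (Ordinal.bddAbove_range.{1,1} _) n
  exact lt_of_lt_of_le (Order.lt_succ _) this

/-- The quasi order on `HC` (`{0,1,2}` carrying the discrete order). -/
noncomputable def HC.le : HC → HC → Prop
  | .ur p, .ur q => p = q
  | .ur p, .sett _ g => ∃ m, HC.le (.ur p) (g m)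
  | .sett _ f, .ur q => ∀ n, HC.le (f n) (.ur q)
  | .sett _ f, .sett _ g => ∀ n, ∃ m, HC.le (f n) (g m)
termination_by x y => (HC.rank x, HC.rank y)
decreasing_by
  · exact Prod.Lex.right _ (HC.rank_lt g m)
  · exact Prod.Lex.left _ _ (HC.rank_lt f n)
  · exact Prod.Lex.left _ _ (HC.rank_lt f n)

/-- The von Neumann style ordinal `α̇ = {0,1} ∪ {γ̇ : γ < α}`. -/
noncomputable def HC.dot : Ordinal.{0} → HC := fun α =>
  HC.sett (ULift.{1} (Fin 2) ⊕ {γ : Ordinal.{0} // γ < α})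
    (Sum.elim (fun i => HC.ur ⟨i.down.1, Nat.lt_succ_of_lt i.down.isLt⟩)
      (fun γ => HC.dot γ.1))
termination_by α => α
decreasing_by exact γ.2

/-- The von Neumann style ordinal `α̈ = {1,2} ∪ {γ̈ : γ < α}`. -/
noncomputable def HC.ddot : Ordinal.{0} → HC := fun α =>
  HC.sett (ULift.{1} (Fin 2) ⊕ {γ : Ordinal.{0} // γ < α})
    (Sum.elim (fun i => HC.ur ⟨i.down.1 + 1, Nat.succ_lt_succ i.down.isLt⟩)
      (fun γ => HC.ddot γ.1))
termination_by α => α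
decreasing_by exact γ.2

theorem dot_le_dot_of_le : ∀ ε : Ordinal, ∀ δ, ε ≤ δ → HC.le (HC.dot ε) (HC.dot δ) := by
  intro ε
  induction ε using Ordinal.induction with
  | h ε IH =>
    intro δ hεδ
    rw [HC.dot, HC.dot, HC.le]
    rintro (i | γ)
    · exact ⟨Sum.inl i, by simp [HC.le]⟩
    · exact ⟨Sum.inr ⟨γ.1, lt_of_lt_of_le γ.2 hεδ⟩, IH γ.1 γ.2 γ.1 le_rfl⟩

theorem le_of_dot_le_dot : ∀ δ γ : Ordinal, HC.le (HC.dot γ) (HC.dot δ) → γ ≤ δ := by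
  intro δ
  induction δ using Ordinal.induction with
  | h δ IH =>
    intro γ h
    by_contra hlt
    push_neg at hlt
    rw [HC.dot, HC.dot, HC.le] at h
    obtain ⟨m, hm⟩ := h (Sum.inr ⟨δ, hlt⟩)
    simp only [Sum.elim_inr] at hm
    rcases m with i | ζ
    · simp only [Sum.elim_inl] at hm
      rw [HC.dot, HC.le] at hm
      have h0 := hm (Sum.inl ⟨0⟩)
      have h1 := hm (Sum.inl ⟨1⟩)
      simp only [Sum.elim_inl] at h0 h1
      rw [HC.le] at h0
      rw [HC.le] at h1
      exact absurd (h0.trans h1.symm) (by decide)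
    · simp only [Sum.elim_inr] at hm
      exact absurd (IH ζ.1 ζ.2 δ hm) (not_le.2 ζ.2)

theorem ddot_le_ddot_of_le : ∀ ε : Ordinal, ∀ δ, ε ≤ δ → HC.le (HC.ddot ε) (HC.ddot δ) := by
  intro ε
  induction ε using Ordinal.induction with
  | h ε IH =>
    intro δ hεδ
    rw [HC.ddot, HC.ddot, HC.le]
    rintro (i | γ)
    · exact ⟨Sum.inl i, by simp [HC.le]⟩
    · exact ⟨Sum.inr ⟨γ.1, lt_of_lt_of_le γ.2 hεδ⟩, IH γ.1 γ.2 γ.1 le_rfl⟩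

theorem le_of_ddot_le_ddot : ∀ δ γ : Ordinal, HC.le (HC.ddot γ) (HC.ddot δ) → γ ≤ δ := by
  intro δ
  induction δ using Ordinal.induction with
  | h δ IH =>
    intro γ h
    by_contra hlt
    push_neg at hlt
    rw [HC.ddot, HC.ddot, HC.le] at h
    obtain ⟨m, hm⟩ := h (Sum.inr ⟨δ, hlt⟩)
    simp only [Sum.elim_inr] at hm
    rcases m with i | ζ
    · simp only [Sum.elim_inl] at hm
      rw [HC.ddot, HC.le] at hm
      have h0 := hm (Sum.inl ⟨0⟩)
      have h1 := hm (Sum.inl ⟨1⟩)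
      simp only [Sum.elim_inl] at h0 h1
      rw [HC.le] at h0
      rw [HC.le] at h1
      exact absurd (h0.trans h1.symm) (by decide)
    · simp only [Sum.elim_inr] at hm
      exact absurd (IH ζ.1 ζ.2 δ hm) (not_le.2 ζ.2)

theorem not_ur0_le_ddot : ∀ β : Ordinal, ¬ HC.le (HC.ur 0) (HC.ddot β) := by
  intro β
  induction β using Ordinal.induction with
  | h β IH =>
    rw [HC.ddot, HC.le]
    rintro ⟨i | γ, hm⟩
    · simp only [Sum.elim_inl] at hm
      rw [HC.le] at hm
      exact absurd hm (fun h => by have : (0 : Fin 3).val = i.down.val + 1 := congrArg Fin.val h; omega)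
    · simp only [Sum.elim_inr] at hm
      exact IH γ.1 γ.2 hm

theorem not_ur2_le_dot : ∀ α : Ordinal, ¬ HC.le (HC.ur 2) (HC.dot α) := by
  intro α
  induction α using Ordinal.induction with
  | h α IH =>
    rw [HC.dot, HC.le]
    rintro ⟨i | γ, hm⟩
    · simp only [Sum.elim_inl] at hm
      rw [HC.le] at hm
      have : (2 : Fin 3).val = i.down.val := congrArg Fin.val hm
      omega
    · simp only [Sum.elim_inr] at hm
      exact IH γ.1 γ.2 hm

theorem stmt1' (α β : Ordinal.{0}) :
    (HC.le (HC.dot α) (HC.dot β) ↔ α ≤ β) ∧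
    (HC.le (HC.ddot α) (HC.ddot β) ↔ α ≤ β) ∧
    ¬ HC.le (HC.dot α) (HC.ddot β) ∧ ¬ HC.le (HC.ddot β) (HC.dot α) := by
  refine ⟨⟨le_of_dot_le_dot β α, dot_le_dot_of_le α β⟩,
    ⟨le_of_ddot_le_ddot β α, ddot_le_ddot_of_le α β⟩, ?_, ?_⟩
  · intro h
    rw [HC.dot, HC.ddot, HC.le] at h
    obtain ⟨m, hm⟩ := h (Sum.inl ⟨0⟩)
    refine not_ur0_le_ddot β ?_
    rw [HC.ddot, HC.le]
    exact ⟨m, by simpa using hm⟩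
  · intro h
    rw [HC.dot, HC.ddot, HC.le] at h
    obtain ⟨m, hm⟩ := h (Sum.inl ⟨1⟩)
    refine not_ur2_le_dot α ?_
    rw [HC.dot, HC.le]
    exact ⟨m, by simpa using hm⟩

theorem stmt1 (α β : Ordinal.{0})
    (hα : α.card ≤ Cardinal.aleph0) (hβ : β.card ≤ Cardinal.aleph0) :
    (HC.le (HC.dot α) (HC.dot β) ↔ α ≤ β) ∧
    (HC.le (HC.ddot α) (HC.ddot β) ↔ α ≤ β) ∧
    ¬ HC.le (HC.dot α) (HC.ddot β) ∧ ¬ HC.le (HC.ddot β) (HC.dot α) := by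
  exact stmt1' α β
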